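/- Let φ = x² + t ∈ ℤ[t][x] with adjusted post-critical orbit (cₙ) in ℤ[t]. Let I ⊆ {1,…,n} be nonempty and let d_I ∈ ℤ[t] be the squarefree part (in ℚ[t]) of ∏_{i∈I} cᵢ. Suppose p is an odd prime such that ∏_{i∈I} cᵢ mod p is a square in 𝔽̄_p[t]. Then d_I has positive degree and p divides disc(d_I). -/

import Mathlib

open Polynomial

/-- The discriminant, up to sign, of a monic polynomial `f`: the product of the values of
`f'` at the roots of `f` (in an algebraically closed field).  For a monic polynomial this
equals `± disc f`. -/
noncomputable def discUpToSign {L : Type*} [Field L] (f : Polynomial L) : L :=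
  (f.roots.map (fun r => (derivative f).eval r)).prod


private noncomputable def aP : ℕ → Polynomial ℤ
  | 0 => 0
  | (n+1) => (aP n) ^ 2 + X

private lemma aP_succ (n : ℕ) : aP (n+1) = (aP n) ^ 2 + X := rfl

private lemma aP_iterate (m : ℕ) : (fun y : Polynomial ℤ => y ^ 2 + X)^[m] 0 = aP m := by
  induction m with
  | zero => rfl
  | succ k ih => rw [Function.iterate_succ_apply', ih]; exact (aP_succ k).symm

private lemma aP_monic_natDegree (m : ℕ) : (aP (m+1)).Monic ∧ (aP (m+1)).natDegree = 2 ^ m := by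
  induction m with
  | zero =>
      have h0 : aP 0 = 0 := rfl
      rw [aP_succ, h0]
      constructor
      · simpa using monic_X
      · simp
  | succ k ih =>
      obtain ⟨hm, hd⟩ := ih
      have hmp : ((aP (k+1)) ^ 2).Monic := hm.pow 2
      have hdp : ((aP (k+1)) ^ 2).natDegree = 2 ^ (k+1) := by
        rw [natDegree_pow, hd]; ring
      have hdX : (X : Polynomial ℤ).degree < ((aP (k+1)) ^ 2).degree := by
        rw [degree_X, degree_eq_natDegree hmp.ne_zero, hdp]
        exact_mod_cast Nat.one_lt_two_pow_iff.mpr (Nat.succ_ne_zero k)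
      rw [aP_succ]
      exact ⟨hmp.add_of_left hdX, by rw [natDegree_eq_of_degree_eq (degree_add_eq_left_of_degree_lt hdX), hdp]⟩

private lemma aP_monic {m : ℕ} (hm : 1 ≤ m) : (aP m).Monic := by
  obtain ⟨k, rfl⟩ : ∃ k, m = k + 1 := ⟨m - 1, by omega⟩
  exact (aP_monic_natDegree k).1

private lemma aP_natDegree {m : ℕ} (hm : 1 ≤ m) : (aP m).natDegree = 2 ^ (m - 1) := by
  obtain ⟨k, rfl⟩ : ∃ k, m = k + 1 := ⟨m - 1, by omega⟩
  simpa using (aP_monic_natDegree k).2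

private lemma aP_derivative {m : ℕ} (hm : 1 ≤ m) :
    ∃ g : Polynomial ℤ, derivative (aP m) = 1 + 2 * g := by
  obtain ⟨k, rfl⟩ : ∃ k, m = k + 1 := ⟨m - 1, by omega⟩
  cases k with
  | zero =>
      have h0 : aP 0 = 0 := rfl
      exact ⟨0, by rw [aP_succ, h0]; simp⟩
  | succ k =>
      refine ⟨aP (k+1) * derivative (aP (k+1)), ?_⟩
      have h2 : (C ((2:ℕ):ℤ)) = 2 := by norm_num
      rw [aP_succ (k+1), derivative_add, derivative_X, derivative_pow, h2]
      ring

private lemma isIntegral_of_root {K : Type*} [Field K] [Algebra ℚ K] {f : Polynomial ℤ}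
    (hf : f.Monic) {r : K} (hr : eval r (f.map (Int.castRingHom K)) = 0) : IsIntegral ℤ r :=
  ⟨f, hf, by rwa [algebraMap_int_eq, eval₂_eq_eval_map]⟩

private lemma isIntegral_aeval {K : Type*} [Field K] [Algebra ℚ K] {r : K}
    (hr : IsIntegral ℤ r) (g : Polynomial ℤ) :
    IsIntegral ℤ (eval r (g.map (Int.castRingHom K))) := by
  have h1 : eval r (g.map (Int.castRingHom K)) = aeval r g := by
    rw [aeval_def, eval₂_eq_eval_map, algebraMap_int_eq]
  rw [h1]
  have h2 : Algebra.adjoin ℤ {r} ≤ integralClosure ℤ K :=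
    Algebra.adjoin_le (Set.singleton_subset_iff.mpr hr)
  exact h2 (aeval_mem_adjoin_singleton ℤ r)

private lemma one_add_two_mul_ne_zero {K : Type*} [Field K] [Algebra ℚ K] [CharZero K] {β : K}
    (hβ : IsIntegral ℤ β) : 1 + 2 * β ≠ 0 := by
  intro h
  have h2 : (2 : K) ≠ 0 := two_ne_zero
  have hβval : β = algebraMap ℚ K (-(1/2)) := by
    have e1 : β * 2 = -1 := by linear_combination h
    have e2 : algebraMap ℚ K (-(1/2)) * 2 = -1 := by
      have : algebraMap ℚ K (-(1/2)) * algebraMap ℚ K 2 = algebraMap ℚ K (-1) := by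
        rw [← map_mul]; norm_num
      simpa using this
    exact mul_right_cancel₀ h2 (e1.trans e2.symm)
  rw [hβval] at hβ
  have hsc : IsScalarTower ℤ ℚ K := IsScalarTower.of_algebraMap_eq (fun x => by
    simp [algebraMap_int_eq, eq_intCast])
  have hint : IsIntegral ℤ (-(1/2) : ℚ) :=
    (isIntegral_algebraMap_iff (algebraMap ℚ K).injective).mp hβ
  obtain ⟨k, hk⟩ := IsIntegrallyClosed.isIntegral_iff.mp hint
  have : ((2 * k : ℤ) : ℚ) = ((-1 : ℤ) : ℚ) := by
    push_cast
    rw [show ((k:ℚ)) = -(1/2) from hk]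
    ring
  have : (2 * k : ℤ) = -1 := Int.cast_injective this
  omega

private lemma aP_deriv_eval_ne_zero {K : Type*} [Field K] [Algebra ℚ K] [CharZero K]
    {m : ℕ} (hm : 1 ≤ m) {r : K} (hint : IsIntegral ℤ r) :
    eval r ((derivative (aP m)).map (Int.castRingHom K)) ≠ 0 := by
  obtain ⟨g, hg⟩ := aP_derivative hm
  rw [hg]
  have : ((1 + 2 * g : Polynomial ℤ).map (Int.castRingHom K)) =
      1 + 2 * (g.map (Int.castRingHom K)) := by
    simp [Polynomial.map_add, Polynomial.map_mul, Polynomial.map_one]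
  rw [this]
  simp only [eval_add, eval_mul, eval_one, eval_ofNat]
  exact one_add_two_mul_ne_zero (isIntegral_aeval hint g)

private lemma aP_rootMultiplicity_eq_one {K : Type*} [Field K] [Algebra ℚ K] [CharZero K]
    {m : ℕ} (hm : 1 ≤ m) {r : K} (hroot : eval r ((aP m).map (Int.castRingHom K)) = 0) :
    rootMultiplicity r ((aP m).map (Int.castRingHom K)) = 1 := by
  set A := (aP m).map (Int.castRingHom K) with hA
  have hAne : A ≠ 0 := ((aP_monic hm).map _).ne_zero
  have h1 : 1 ≤ rootMultiplicity r A := (rootMultiplicity_pos hAne).mpr hroot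
  have h2 : rootMultiplicity r A ≤ 1 := by
    by_contra hc
    push_neg at hc
    have hdvd : (X - C r) ^ 2 ∣ A :=
      dvd_trans (pow_dvd_pow _ hc) (pow_rootMultiplicity_dvd A r)
    obtain ⟨q, hq⟩ := hdvd
    have hder : eval r (derivative A) = 0 := by
      rw [hq]
      simp [derivative_mul, derivative_pow]
    have := aP_deriv_eval_ne_zero hm (isIntegral_of_root (aP_monic hm) hroot) (K := K)
    rw [← derivative_map] at this
    exact this hder
  omega

private lemma sum_two_pow (k : ℕ) : ∑ i ∈ Finset.range k, 2 ^ i = 2 ^ k - 1 := by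
  induction k with
  | zero => simp
  | succ n ih =>
      rw [Finset.sum_range_succ, ih]
      have : 1 ≤ 2 ^ n := Nat.one_le_two_pow
      have h2 : (2:ℕ) ^ (n+1) = 2 * 2 ^ n := by ring
      omega

private lemma exists_periodic_root {K : Type*} [Field K] [Algebra ℚ K] [CharZero K]
    [IsAlgClosed K] {m : ℕ} (hm : 1 ≤ m) :
    ∃ r : K, eval r ((aP m).map (Int.castRingHom K)) = 0 ∧
      ∀ j, 1 ≤ j → j < m → eval r ((aP j).map (Int.castRingHom K)) ≠ 0 := by
  classical
  set φ := Int.castRingHom K with hφ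
  set A := (aP m).map φ with hA
  have hAmon : A.Monic := (aP_monic hm).map φ
  have hAdeg : A.natDegree = 2 ^ (m - 1) := by
    rw [hA, (aP_monic hm).natDegree_map, aP_natDegree hm]
  have hsplit : Splits A := IsAlgClosed.splits A
  have hcard : Multiset.card A.roots = 2 ^ (m - 1) := by
    rw [splits_iff_card_roots.mp hsplit, hAdeg]
  have hnodup : A.roots.Nodup := by
    rw [Multiset.nodup_iff_count_le_one]
    intro r
    rw [count_roots]
    by_cases hr : eval r A = 0
    · exact le_of_eq (aP_rootMultiplicity_eq_one hm hr)
    · rw [rootMultiplicity_eq_zero hr]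
      exact Nat.zero_le _
  by_contra hcon
  push_neg at hcon
  set P := ∏ j ∈ Finset.Ico 1 m, (aP j).map φ with hP
  have hPmon : P.Monic := monic_prod_of_monic _ _ (fun j hj =>
    (aP_monic (Finset.mem_Ico.mp hj).1).map φ)
  have hPdeg : P.natDegree = 2 ^ (m - 1) - 1 := by
    show (∏ j ∈ Finset.Ico 1 m, (aP j).map φ).natDegree = 2 ^ (m - 1) - 1
    rw [natDegree_prod _ _ (fun j hj => ((aP_monic (Finset.mem_Ico.mp hj).1).map φ).ne_zero)]
    have : ∀ j ∈ Finset.Ico 1 m, ((aP j).map φ).natDegree = 2 ^ (j - 1) := fun j hj => by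
      rw [(aP_monic (Finset.mem_Ico.mp hj).1).natDegree_map, aP_natDegree (Finset.mem_Ico.mp hj).1]
    rw [Finset.sum_congr rfl this, Finset.sum_Ico_eq_sum_range]
    simp only [Nat.add_sub_cancel_left]
    exact sum_two_pow (m-1)
  have hsub : A.roots.toFinset ⊆ P.roots.toFinset := by
    intro r hr
    rw [Multiset.mem_toFinset] at hr ⊢
    have hroot : eval r A = 0 := (mem_roots hAmon.ne_zero).mp hr
    obtain ⟨j, hj1, hj2, hj3⟩ := hcon r hroot
    rw [mem_roots hPmon.ne_zero]
    show eval r (∏ j ∈ Finset.Ico 1 m, (aP j).map φ) = 0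
    rw [eval_prod]
    exact Finset.prod_eq_zero (Finset.mem_Ico.mpr ⟨hj1, hj2⟩) hj3
  have hc1 : A.roots.toFinset.card = 2 ^ (m - 1) := by
    rw [Multiset.toFinset_card_of_nodup hnodup, hcard]
  have hc2 : P.roots.toFinset.card ≤ 2 ^ (m - 1) - 1 := by
    calc P.roots.toFinset.card ≤ Multiset.card P.roots := Multiset.toFinset_card_le _
    _ ≤ P.natDegree := card_roots' P
    _ = 2 ^ (m - 1) - 1 := hPdeg
  have := Finset.card_le_card hsub
  have hge : 1 ≤ 2 ^ (m - 1) := Nat.one_le_two_pow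
  omega

private lemma not_square {K : Type*} [Field K] [Algebra ℚ K] [CharZero K] [IsAlgClosed K]
    {n : ℕ} {I : Finset ℕ} (hI : I ⊆ Finset.Icc 1 n) (hIne : I.Nonempty) (w : Polynomial K) :
    w ^ 2 ≠ (∏ i ∈ I, aP i).map (Int.castRingHom K) := by
  classical
  intro hw
  set φ := Int.castRingHom K with hφ
  set M := I.max' hIne with hM
  have hMI : M ∈ I := I.max'_mem hIne
  have hM1 : 1 ≤ M := (Finset.mem_Icc.mp (hI hMI)).1
  obtain ⟨r, hr0, hrj⟩ := exists_periodic_root (K := K) hM1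
  have hmem : ∀ i ∈ I, 1 ≤ i := fun i hi => (Finset.mem_Icc.mp (hI hi)).1
  have hFmap : (∏ i ∈ I, aP i).map φ = ∏ i ∈ I, (aP i).map φ := Polynomial.map_prod φ _ _
  have hmonics : ∀ i ∈ I, ((aP i).map φ).Monic := fun i hi => (aP_monic (hmem i hi)).map φ
  have hFne : (∏ i ∈ I, (aP i).map φ) ≠ 0 :=
    (monic_prod_of_monic _ _ hmonics).ne_zero
  -- split off the factor at M
  have hsplitM : ∏ i ∈ I, (aP i).map φ = (aP M).map φ * ∏ i ∈ I.erase M, (aP i).map φ :=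
    (Finset.mul_prod_erase I _ hMI).symm
  have hrestne : eval r (∏ i ∈ I.erase M, (aP i).map φ) ≠ 0 := by
    rw [eval_prod]
    rw [Finset.prod_ne_zero_iff]
    intro i hi
    have hiI : i ∈ I := Finset.mem_of_mem_erase hi
    have hine : i ≠ M := Finset.ne_of_mem_erase hi
    have hilt : i < M := lt_of_le_of_ne (I.le_max' i hiI) hine
    exact hrj i (hmem i hiI) hilt
  have hreste : (∏ i ∈ I.erase M, (aP i).map φ) ≠ 0 := fun h => hrestne (by rw [h]; simp)
  have hrmrest : rootMultiplicity r (∏ i ∈ I.erase M, (aP i).map φ) = 0 :=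
    rootMultiplicity_eq_zero hrestne
  have hrmM : rootMultiplicity r ((aP M).map φ) = 1 := aP_rootMultiplicity_eq_one hM1 hr0
  have hrmF : rootMultiplicity r ((∏ i ∈ I, aP i).map φ) = 1 := by
    rw [hFmap, hsplitM, rootMultiplicity_mul (by rw [← hsplitM]; exact hFne), hrmM, hrmrest]
  have hwne : w ≠ 0 := by
    intro h
    exact hFne (by rw [← hFmap, ← hw, h]; norm_num)
  have hrmw : rootMultiplicity r (w ^ 2) = 2 * rootMultiplicity r w := by
    rw [pow_two, rootMultiplicity_mul (by rw [← pow_two]; rw [hw, hFmap]; exact hFne)]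
    ring
  rw [hw, hrmF] at hrmw
  omega

private lemma eval_int_map_hom {L L' : Type*} [CommRing L] [CommRing L'] (f : L →+* L')
    (g : Polynomial ℤ) (r : L) :
    f (eval r (g.map (Int.castRingHom L))) = eval (f r) (g.map (Int.castRingHom L')) := by
  rw [← eval₂_eq_eval_map, ← eval₂_eq_eval_map, hom_eval₂]
  congr 1
  exact RingHom.ext_int _ _

private lemma int_map_ringHom_comp {L L' : Type*} [CommRing L] [CommRing L'] (f : L →+* L')
    (g : Polynomial ℤ) :
    (g.map (Int.castRingHom L)).map f = g.map (Int.castRingHom L') := by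
  rw [map_map]
  congr 1
  exact RingHom.ext_int _ _

private lemma exists_integer_disc {d : Polynomial ℤ} (hd : d.Monic) :
    ∃ m : ℤ, ((m : ℚ) : AlgebraicClosure ℚ) =
      discUpToSign (d.map (Int.castRingHom (AlgebraicClosure ℚ))) := by
  classical
  set K := AlgebraicClosure ℚ
  set dQ := d.map (Int.castRingHom ℚ) with hdQ
  set L := dQ.SplittingField
  set dL := d.map (Int.castRingHom L) with hdL
  have hmapL : dQ.map (algebraMap ℚ L) = dL := int_map_ringHom_comp _ d
  have hsplL : dL.Splits := by
    rw [← hmapL]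
    exact SplittingField.splits dQ
  set DL := (dL.roots.map (fun r => eval r (derivative dL))).prod with hDL
  -- Galois invariance
  have hsigma : ∀ σ : L ≃ₐ[ℚ] L, σ DL = DL := by
    intro σ
    set σf : L →+* L := σ.toRingEquiv.toRingHom with hσf
    have hσap : ∀ x : L, σ x = σf x := fun _ => rfl
    have hmapσ : dL.map σf = dL := by rw [hdL]; exact int_map_ringHom_comp σf d
    have hroots : dL.roots.map σf = dL.roots := by
      rw [← hsplL.roots_map σf, hmapσ]
    rw [hσap, hDL, map_multiset_prod]
    conv_rhs => rw [← hroots]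
    rw [Multiset.map_map, Multiset.map_map]
    congr 1
    apply Multiset.map_congr rfl
    intro r _
    show σf (eval r (derivative dL)) = eval (σf r) (derivative dL)
    rw [hdL, derivative_map, eval_int_map_hom σf (derivative d) r]
  have hfix : DL ∈ IntermediateField.fixedField (⊤ : Subgroup (L ≃ₐ[ℚ] L)) := by
    intro g
    show g.1 • DL = DL
    rw [AlgEquiv.smul_def]
    exact hsigma g.1
  haveI : Normal ℚ L := Polynomial.SplittingField.instNormal dQ
  haveI hgal : IsGalois ℚ L := ⟨⟩
  have htfae := IsGalois.tfae (F := ℚ) (E := L)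
  have htop : IntermediateField.fixedField (⊤ : Subgroup (L ≃ₐ[ℚ] L)) = ⊥ :=
    (htfae.out 0 1).mp hgal
  rw [htop, IntermediateField.mem_bot] at hfix
  obtain ⟨ρ, hρ⟩ := hfix
  -- integrality
  have hDLint : IsIntegral ℤ DL := by
    have : DL ∈ integralClosure ℤ L := by
      apply Subalgebra.multiset_prod_mem
      intro x hx
      obtain ⟨r, hr, rfl⟩ := Multiset.mem_map.mp hx
      have hroot : eval r dL = 0 := (mem_roots ((hd.map _).ne_zero)).mp hr
      have hint : IsIntegral ℤ r := isIntegral_of_root hd hroot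
      show IsIntegral ℤ _
      rw [hdL, derivative_map]
      exact isIntegral_aeval hint (derivative d)
    exact this
  rw [← hρ] at hDLint
  have hρint : IsIntegral ℤ ρ :=
    (isIntegral_algebraMap_iff (algebraMap ℚ L).injective).mp hDLint
  obtain ⟨m, hm⟩ := IsIntegrallyClosed.isIntegral_iff.mp hρint
  -- transfer to the algebraic closure
  haveI : Algebra.IsAlgebraic ℚ L := Algebra.IsAlgebraic.of_finite ℚ L
  set ι : L →ₐ[ℚ] K := IsAlgClosed.lift with hι
  set ιf : L →+* K := ι.toRingHom with hιf
  have hdK : d.map (Int.castRingHom K) = dL.map ιf := (int_map_ringHom_comp ιf d).symm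
  have hrootsK : (d.map (Int.castRingHom K)).roots = dL.roots.map ιf := by
    rw [hdK]
    exact hsplL.roots_map ιf
  refine ⟨m, ?_⟩
  have hDK : discUpToSign (d.map (Int.castRingHom K)) = ιf DL := by
    rw [discUpToSign, hrootsK, hDL, map_multiset_prod, Multiset.map_map, Multiset.map_map]
    congr 1
    apply Multiset.map_congr rfl
    intro r _
    show eval (ιf r) (derivative (d.map (Int.castRingHom K))) = ιf (eval r (derivative dL))
    rw [hdL, derivative_map, derivative_map, eval_int_map_hom ιf (derivative d) r]
  rw [hDK, ← hρ, ← hm]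
  show ((m : ℚ) : K) = ιf (algebraMap ℚ L (algebraMap ℤ ℚ m))
  rw [hιf]
  rw [show (ι.toRingHom : L → K) = ι from rfl]
  rw [ι.commutes]
  push_cast
  rfl

set_option maxHeartbeats 1000000 in
set_option synthInstance.maxHeartbeats 400000 in
private lemma disc_dvd_of_bad_reduction {d : Polynomial ℤ} (hd : d.Monic) {p : ℕ}
    [hp : Fact p.Prime] {m : ℤ}
    (hm : ((m : ℚ) : (AlgebraicClosure ℚ)) =
      discUpToSign (d.map (Int.castRingHom ((AlgebraicClosure ℚ)))))
    {t₀ : (AlgebraicClosure (ZMod p))}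
    (h0 : eval t₀ (d.map (Int.castRingHom ((AlgebraicClosure (ZMod p))))) = 0)
    (h1 : eval t₀ (derivative (d.map (Int.castRingHom ((AlgebraicClosure (ZMod p)))))) = 0) :
    (p : ℤ) ∣ m := by
  classical
  set R := integralClosure ℤ (AlgebraicClosure ℚ) with hR
  haveI hRint : Algebra.IsIntegral ℤ R := ⟨fun x => integralClosure.isIntegral x⟩
  have hKinj : Function.Injective (algebraMap ℤ (AlgebraicClosure ℚ)) := fun a b h => by
    rw [show algebraMap ℤ (AlgebraicClosure ℚ) = Int.castRingHom _ from RingHom.ext_int _ _] at h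
    exact Int.cast_injective (h : ((a : ℤ) : AlgebraicClosure ℚ) = _)
  have hRinj : Function.Injective (algebraMap ℤ R) := by
    intro a b h
    have h2 : algebraMap R (AlgebraicClosure ℚ) (algebraMap ℤ R a) = algebraMap R (AlgebraicClosure ℚ) (algebraMap ℤ R b) :=
      congrArg _ h
    rw [← IsScalarTower.algebraMap_apply, ← IsScalarTower.algebraMap_apply] at h2
    exact hKinj h2
  have hRKinj : Function.Injective (algebraMap R (AlgebraicClosure ℚ)) := fun a b h => Subtype.ext h
  -- a maximal ideal over (p)
  have hpmax : (Ideal.span {(p : ℤ)}).IsMaximal :=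
    PrincipalIdealRing.isMaximal_of_irreducible
      (Nat.prime_iff_prime_int.mp hp.out).irreducible
  obtain ⟨Q, hQmax, hQcomap⟩ :=
    Ideal.exists_ideal_over_maximal_of_isIntegral (R := ℤ) (S := R) (Ideal.span {(p : ℤ)})
      (by
        rw [(RingHom.injective_iff_ker_eq_bot _).mp hRinj]
        exact bot_le)
  letI : Field (R ⧸ Q) := Ideal.Quotient.field Q
  have hmempQ : algebraMap ℤ R (p : ℤ) ∈ Q := by
    have : (p : ℤ) ∈ Ideal.comap (algebraMap ℤ R) Q := by
      rw [hQcomap]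
      exact Ideal.mem_span_singleton_self _
    exact this
  have hp0 : ((p : ℕ) : R ⧸ Q) = 0 := by
    have h2 : ((p : ℕ) : R ⧸ Q) = Ideal.Quotient.mk Q (algebraMap ℤ R (p : ℤ)) := by
      rw [show algebraMap ℤ R (p : ℤ) = ((p : ℕ) : R) by push_cast; rfl, map_natCast]
    rw [h2, Ideal.Quotient.eq_zero_iff_mem]
    exact hmempQ
  haveI hchar : CharP (R ⧸ Q) p := (CharP.charP_iff_prime_eq_zero hp.out).mpr hp0
  letI : Algebra (ZMod p) (R ⧸ Q) := (ZMod.castHom dvd_rfl (R ⧸ Q)).toAlgebra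
  haveI : Algebra.IsAlgebraic (ZMod p) (R ⧸ Q) := by
    constructor
    intro x
    obtain ⟨r, rfl⟩ := Ideal.Quotient.mk_surjective x
    obtain ⟨P, hPm, hPev⟩ := integralClosure.isIntegral (R := ℤ) (A := (AlgebraicClosure ℚ)) r
    have hint : IsIntegral (ZMod p) (Ideal.Quotient.mk Q r) := by
      refine ⟨P.map (Int.castRingHom (ZMod p)), hPm.map _, ?_⟩
      rw [eval₂_map]
      have hcomp : (algebraMap (ZMod p) (R ⧸ Q)).comp (Int.castRingHom (ZMod p)) =
          (Ideal.Quotient.mk Q).comp (algebraMap ℤ R) := RingHom.ext_int _ _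
      rw [hcomp, ← hom_eval₂, hPev, map_zero]
    exact hint.isAlgebraic
  haveI : FaithfulSMul (ZMod p) (R ⧸ Q) :=
    (faithfulSMul_iff_algebraMap_injective _ _).mpr (algebraMap (ZMod p) (R ⧸ Q)).injective
  haveI : FaithfulSMul (ZMod p) (AlgebraicClosure (ZMod p)) :=
    (faithfulSMul_iff_algebraMap_injective _ _).mpr (algebraMap (ZMod p) (AlgebraicClosure (ZMod p))).injective
  set ι : (R ⧸ Q) →ₐ[ZMod p] (AlgebraicClosure (ZMod p)) := IsAlgClosed.lift with hι
  set ψ : R →+* (AlgebraicClosure (ZMod p)) := ι.toRingHom.comp (Ideal.Quotient.mk Q) with hψ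
  -- roots of d over (AlgebraicClosure ℚ)
  set dK := d.map (Int.castRingHom (AlgebraicClosure ℚ)) with hdK
  set Mroots := dK.roots with hMroots
  have hMint : ∀ r ∈ Mroots, r ∈ R := fun r hr =>
    isIntegral_of_root hd ((mem_roots (hd.map _).ne_zero).mp hr)
  set M' : Multiset R := Mroots.pmap (fun r hr => (⟨r, hr⟩ : R)) hMint with hM'
  have hM'map : M'.map (algebraMap R (AlgebraicClosure ℚ)) = Mroots := by
    rw [hM', Multiset.map_pmap]
    calc Mroots.pmap (fun r (hr : r ∈ R) => algebraMap R (AlgebraicClosure ℚ) (⟨r, hr⟩ : R)) hMint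
        = Mroots.pmap (fun r _ => r) hMint := by
          apply Multiset.pmap_congr
          intro r hr _ _
          rfl
      _ = Mroots := by rw [Multiset.pmap_eq_map]; exact Multiset.map_id _
  set dR := d.map (Int.castRingHom R) with hdR
  have hfactK : dK = (Mroots.map (fun r => X - C r)).prod :=
    (IsAlgClosed.splits _).eq_prod_roots_of_monic (hd.map _)
  have hfactR : dR = (M'.map (fun r => X - C r)).prod := by
    apply map_injective (algebraMap R (AlgebraicClosure ℚ)) hRKinj
    rw [← coe_mapRingHom, map_multiset_prod, Multiset.map_map]
    calc (mapRingHom (algebraMap R (AlgebraicClosure ℚ))) dR = dK := by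
          rw [coe_mapRingHom, hdR, int_map_ringHom_comp]
      _ = (Mroots.map (fun r => X - C r)).prod := hfactK
      _ = ((M'.map (algebraMap R (AlgebraicClosure ℚ))).map (fun r => X - C r)).prod := by rw [hM'map]
      _ = (M'.map ((mapRingHom (algebraMap R (AlgebraicClosure ℚ))) ∘ fun r => X - C r)).prod := by
          rw [Multiset.map_map]
          congr 1
          apply Multiset.map_congr rfl
          intro r _
          simp
  -- factorization over (AlgebraicClosure (ZMod p))
  have hfactFp : d.map (Int.castRingHom (AlgebraicClosure (ZMod p))) = (M'.map (fun r => X - C (ψ r))).prod := by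
    have h4 := congrArg (mapRingHom ψ) hfactR
    rw [coe_mapRingHom, hdR, int_map_ringHom_comp] at h4
    rw [h4, ← coe_mapRingHom, map_multiset_prod, Multiset.map_map]
    congr 1
    apply Multiset.map_congr rfl
    intro r _
    simp
  -- t₀ is the image of a root
  obtain ⟨r₀, hr₀M, hr₀⟩ : ∃ r₀ ∈ M', t₀ = ψ r₀ := by
    rw [hfactFp, eval_multiset_prod, Multiset.map_map] at h0
    rw [Multiset.prod_eq_zero_iff] at h0
    obtain ⟨r₀, hr₀M, hr₀⟩ := Multiset.mem_map.mp h0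
    refine ⟨r₀, hr₀M, ?_⟩
    have : eval t₀ (X - C (ψ r₀)) = 0 := hr₀
    rw [eval_sub, eval_X, eval_C, sub_eq_zero] at this
    exact this
  -- the discriminant over R
  set DR := (M'.map (fun r => eval r (derivative dR))).prod with hDR
  have hDRK : algebraMap R (AlgebraicClosure ℚ) DR = discUpToSign dK := by
    rw [hDR, map_multiset_prod, Multiset.map_map, discUpToSign, ← hMroots]
    conv_rhs => rw [← hM'map]
    rw [Multiset.map_map]
    congr 1
    apply Multiset.map_congr rfl
    intro r _
    show algebraMap R (AlgebraicClosure ℚ) (eval r (derivative dR)) = eval (algebraMap R (AlgebraicClosure ℚ) r) (derivative dK)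
    rw [hdR, hdK, derivative_map, derivative_map, eval_int_map_hom (algebraMap R (AlgebraicClosure ℚ))]
  have hmDR : algebraMap ℤ R m = DR := by
    apply hRKinj
    rw [← IsScalarTower.algebraMap_apply, hDRK]
    rw [show algebraMap ℤ (AlgebraicClosure ℚ) = Int.castRingHom _ from RingHom.ext_int _ _]
    have h5 : ((m : ℚ) : AlgebraicClosure ℚ) = (Int.castRingHom (AlgebraicClosure ℚ)) m := by
      rw [eq_intCast (Int.castRingHom (AlgebraicClosure ℚ)) m]
      push_cast
      rfl
    rw [← h5, hm]
  -- push to (AlgebraicClosure (ZMod p))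
  have hψm : (m : (AlgebraicClosure (ZMod p))) = ψ DR := by
    rw [← hmDR, hψ]
    simp only [RingHom.coe_comp, Function.comp_apply, algebraMap_int_eq, map_intCast, eq_intCast]
  have hψDR : ψ DR = 0 := by
    rw [hDR, map_multiset_prod, Multiset.map_map]
    apply Multiset.prod_eq_zero
    rw [Multiset.mem_map]
    refine ⟨r₀, hr₀M, ?_⟩
    show ψ (eval r₀ (derivative dR)) = 0
    rw [hdR, derivative_map, eval_int_map_hom ψ (derivative d) r₀, ← hr₀]
    rw [derivative_map] at h1
    exact h1
  have hm0 : (m : (AlgebraicClosure (ZMod p))) = 0 := hψm.trans hψDR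
  have hz : (m : ZMod p) = 0 := by
    have hinj := (algebraMap (ZMod p) (AlgebraicClosure (ZMod p))).injective
    apply hinj
    rw [map_intCast, map_zero]
    exact hm0
  exact (ZMod.intCast_zmod_eq_zero_iff_dvd m p).mp hz


/-- Let `φ = x² + t ∈ ℤ[t][x]` with adjusted post-critical orbit `(cₙ)` in
`ℤ[t]`.  Let `I ⊆ {1,…,n}` be nonempty and `d_I ∈ ℤ[t]` be the (monic) squarefree part in
`ℚ[t]` of `∏_{i∈I} cᵢ`.  If `p` is an odd prime such that `∏_{i∈I} cᵢ mod p` is a square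
in `𝔽̄_p[t]`, then `d_I` has positive degree and `p ∣ disc(d_I)` (the discriminant being an
integer since `d_I` is monic, stated here up to sign via the product of `d_I'` over the
roots of `d_I`). -/
theorem stmt_14 (c : ℕ → Polynomial ℤ)
    (hc1 : c 1 = X)
    (hcn : ∀ m, 2 ≤ m → c m = (fun y => y ^ 2 + X)^[m] 0)
    (n : ℕ) (I : Finset ℕ) (hI : I ⊆ Finset.Icc 1 n) (hIne : I.Nonempty)
    (d : Polynomial ℤ) (hmonic : d.Monic)
    (y : Polynomial ℚ)
    (hsfpart : (∏ i ∈ I, c i).map (Int.castRingHom ℚ) = d.map (Int.castRingHom ℚ) * y ^ 2)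
    (hsf : Squarefree (d.map (Int.castRingHom ℚ)))
    (p : ℕ) [Fact p.Prime] (hodd : p ≠ 2)
    (hsquare : ∃ s : Polynomial (AlgebraicClosure (ZMod p)),
      s ^ 2 = (∏ i ∈ I, c i).map (Int.castRingHom (AlgebraicClosure (ZMod p)))) :
    0 < d.natDegree ∧
      ∃ m : ℤ, (m : AlgebraicClosure ℚ) =
          discUpToSign (d.map (Int.castRingHom (AlgebraicClosure ℚ))) ∧
        (p : ℤ) ∣ m := by
  classical
  have hmem1 : ∀ i ∈ I, 1 ≤ i := fun i hi => (Finset.mem_Icc.mp (hI hi)).1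
  have hc : ∀ i ∈ I, c i = aP i := by
    intro i hi
    rcases eq_or_lt_of_le (hmem1 i hi) with h | h
    · rw [← h, hc1]
      have : aP 1 = X := by rw [aP_succ]; simp [show aP 0 = 0 from rfl]
      rw [this]
    · rw [hcn i h, aP_iterate]
  have hF : (∏ i ∈ I, c i) = ∏ i ∈ I, aP i := Finset.prod_congr rfl hc
  have hFmonic : (∏ i ∈ I, c i).Monic := by
    rw [hF]
    exact monic_prod_of_monic _ _ (fun i hi => aP_monic (hmem1 i hi))
  -- Part 1 : d has positive degree
  have hdpos : 0 < d.natDegree := by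
    by_contra hcon
    push_neg at hcon
    have h0 : d.natDegree = 0 := by omega
    obtain ⟨a, ha⟩ := natDegree_eq_zero.mp h0
    have ha1 : a = 1 := by
      have := hmonic
      rw [Monic, ← ha, leadingCoeff_C] at this
      exact this
    have hd1 : d = 1 := by rw [← ha, ha1, map_one]
    rw [hd1] at hsfpart
    simp only [Polynomial.map_one, one_mul] at hsfpart
    have hK := congrArg (Polynomial.map (algebraMap ℚ (AlgebraicClosure ℚ))) hsfpart
    rw [int_map_ringHom_comp, Polynomial.map_pow] at hK
    exact not_square hI hIne (y.map (algebraMap ℚ (AlgebraicClosure ℚ)))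
      (by rw [← hF]; exact hK.symm) |>.elim
  refine ⟨hdpos, ?_⟩
  -- the integer discriminant
  obtain ⟨m, hmeq⟩ := exists_integer_disc hmonic
  have hmeq' : ((m : ℤ) : AlgebraicClosure ℚ) =
      discUpToSign (d.map (Int.castRingHom (AlgebraicClosure ℚ))) := by
    rw [← hmeq, Rat.cast_intCast]
  refine ⟨m, hmeq', ?_⟩
  -- integrality of y
  have hdvdy : y ∣ (∏ i ∈ I, c i).map (algebraMap ℤ ℚ) := by
    rw [algebraMap_int_eq, hsfpart]
    exact ⟨d.map (Int.castRingHom ℚ) * y, by ring⟩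
  obtain ⟨z, hz⟩ := IsIntegrallyClosed.eq_map_mul_C_of_dvd ℚ hFmonic hdvdy
  have hlcy : y.leadingCoeff ^ 2 = 1 := by
    have h1 : ((∏ i ∈ I, c i).map (Int.castRingHom ℚ)).leadingCoeff = 1 := hFmonic.map _
    rw [hsfpart, leadingCoeff_mul, leadingCoeff_pow, (hmonic.map _).leadingCoeff, one_mul] at h1
    exact h1
  have hysq : y ^ 2 = (z.map (algebraMap ℤ ℚ)) ^ 2 := by
    rw [← hz]
    rw [mul_pow, ← C_pow, hlcy, map_one, mul_one]
  have hFdz : (∏ i ∈ I, c i) = d * z ^ 2 := by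
    apply map_injective (Int.castRingHom ℚ) (fun a b h => Int.cast_injective h)
    rw [hsfpart, hysq, Polynomial.map_mul, Polynomial.map_pow, algebraMap_int_eq]
  -- leading coefficient of z
  have hlcz : z.leadingCoeff = 1 ∨ z.leadingCoeff = -1 := by
    have h1 : (d * z ^ 2).leadingCoeff = 1 := by rw [← hFdz]; exact hFmonic
    rw [leadingCoeff_mul, leadingCoeff_pow, hmonic.leadingCoeff, one_mul] at h1
    have : IsUnit z.leadingCoeff := IsUnit.of_mul_eq_one _ (by nlinarith [sq_nonneg z.leadingCoeff] : z.leadingCoeff * z.leadingCoeff = 1)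
    exact Int.isUnit_iff.mp this
  -- over the algebraic closure of ZMod p
  obtain ⟨s, hs⟩ := hsquare
  set Fb := AlgebraicClosure (ZMod p)
  set db := d.map (Int.castRingHom Fb) with hdb
  set zb := z.map (Int.castRingHom Fb) with hzb
  have hsfb : s ^ 2 = db * zb ^ 2 := by
    rw [hs, hFdz, Polynomial.map_mul, Polynomial.map_pow]
  have hdbmonic : db.Monic := hmonic.map _
  have hdbdeg : db.natDegree = d.natDegree := hmonic.natDegree_map _
  have hzbne : zb ≠ 0 := by
    intro hzero
    have : zb.coeff z.natDegree = 0 := by rw [hzero]; simp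
    rw [hzb, coeff_map] at this
    rcases hlcz with h | h <;> rw [show z.coeff z.natDegree = z.leadingCoeff from rfl, h] at this <;>
      simp at this
  have hsne : s ≠ 0 := by
    intro hzero
    rw [hzero] at hs
    have : ((∏ i ∈ I, c i).map (Int.castRingHom Fb)).Monic := hFmonic.map _
    rw [← hs] at this
    simp [Monic] at this
  have hdbne : db ≠ 0 := hdbmonic.ne_zero
  -- a root of db
  obtain ⟨t₀, ht₀⟩ := IsAlgClosed.exists_root db (by
    have hpos := natDegree_pos_iff_degree_pos.mp (show 0 < db.natDegree by omega)
    exact hpos.ne')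
  have ht₀root : eval t₀ db = 0 := ht₀
  -- root multiplicity parity
  have hrmeq : 2 * rootMultiplicity t₀ s =
      rootMultiplicity t₀ db + 2 * rootMultiplicity t₀ zb := by
    have h1 : rootMultiplicity t₀ (s * s) = rootMultiplicity t₀ s + rootMultiplicity t₀ s :=
      rootMultiplicity_mul (mul_ne_zero hsne hsne)
    have h2 : rootMultiplicity t₀ (db * (zb * zb)) =
        rootMultiplicity t₀ db + (rootMultiplicity t₀ zb + rootMultiplicity t₀ zb) := by
      rw [rootMultiplicity_mul (mul_ne_zero hdbne (mul_ne_zero hzbne hzbne)),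
        rootMultiplicity_mul (mul_ne_zero hzbne hzbne)]
    have h3 : s * s = db * (zb * zb) := by
      have h := hsfb
      rw [pow_two, pow_two] at h
      linear_combination h
    rw [h3] at h1
    rw [h1] at h2
    omega
  have hrmpos : 1 ≤ rootMultiplicity t₀ db := (rootMultiplicity_pos hdbne).mpr ht₀root
  have hrm2 : 2 ≤ rootMultiplicity t₀ db := by omega
  have hderiv0 : eval t₀ (derivative db) = 0 := by
    have hdvd : (X - C t₀) ^ 2 ∣ db :=
      dvd_trans (pow_dvd_pow _ hrm2) (pow_rootMultiplicity_dvd db t₀)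
    obtain ⟨q, hq⟩ := hdvd
    rw [hq]
    simp [derivative_mul, derivative_pow]
  exact disc_dvd_of_bad_reduction hmonic hmeq ht₀root hderiv0
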